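/- Let d ≥ 3 and m ≥ d−2 (m ∈ ℝ). Let φ : ℝ^d → ℂ be a compactly supported function that belongs to C_b^m(O,ℂ) for some open set O ⊆ ℝ^d containing the support of φ, with ⌊m⌋ ≥ d−2. Then the Fourier integral φ̂(a) = ∫_{ℝ^d} φ(t) e^{-i⟨t,a⟩} dt satisfies φ̂(a) = o(‖a‖^{-(d−2)}) as ‖a‖ → ∞. In particular, under the hypotheses of the renewal theorem (Hypothesis R(m) with m = max{d−2, 2+ε}), the quantities J(a) = ∫_{‖t‖≤α} χ(t) ĥ(t) (Σ_{n≥1} R_n(t)) e^{-i⟨t,a⟩} dt and K(a) = ∫_{r<‖t‖≤b} (1−χ(t)) ĥ(t) (Σ_{n≥1} E[f(X_n) e^{i⟨t,S_n⟩}]) e^{-i⟨t,a⟩} dt satisfy J(a) + K(a) = o(‖a‖^{-(d−2)}) as ‖a‖ → ∞. -/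

import Mathlib

open MeasureTheory Filter Metric
open scoped Topology ENNReal NNReal BigOperators

noncomputable section

abbrev Ed (d : ℕ) : Type := EuclideanSpace ℝ (Fin d)

/-- Membership in `C_b^m(O, ℂ)`. -/
def IsCbm {d : ℕ} (m : ℝ) (O : Set (Ed d)) (U : Ed d → ℂ) : Prop :=
  ContDiffOn ℝ (⌊m⌋₊ : ℕ) U O ∧
  (∀ j : ℕ, j ≤ ⌊m⌋₊ → ∃ C : ℝ, ∀ t ∈ O, ‖iteratedFDerivWithin ℝ j U O t‖ ≤ C) ∧
  ∃ C : ℝ, 0 ≤ C ∧ ∀ t ∈ O, ∀ t' ∈ O,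
    ‖iteratedFDerivWithin ℝ (⌊m⌋₊) U O t - iteratedFDerivWithin ℝ (⌊m⌋₊) U O t'‖
      ≤ C * ‖t - t'‖ ^ (m - (⌊m⌋₊ : ℝ))

/-- Fourier transform with the convention `ĝ(t) = ∫ g(x) e^{-i⟨t,x⟩} dx`. -/
def ftransform {d : ℕ} (g : Ed d → ℂ) (t : Ed d) : ℂ :=
  ∫ x : Ed d, g x * Complex.exp (-Complex.I * ((inner ℝ t x : ℝ) : ℂ))

/-- The space `H_k`. -/
def MemHk {d : ℕ} (k : ℕ) (g : Ed d → ℂ) : Prop :=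
  Continuous g ∧ Integrable g ∧ HasCompactSupport (ftransform g) ∧
    ContDiff ℝ (k : ℕ∞) (ftransform g)

/-- The constant `C_d`. -/
def Cd (d : ℕ) (Sig : Matrix (Fin d) (Fin d) ℝ) : ℝ :=
  2⁻¹ * Real.pi ^ (-(d : ℝ) / 2) * Sig.det ^ (-(1 : ℝ) / 2) * Real.Gamma (((d : ℝ) - 2) / 2)

/-- `⟨Σ⁻¹ a, a⟩`. -/
def qInv {d : ℕ} (Sig : Matrix (Fin d) (Fin d) ℝ) (a : Ed d) : ℝ :=
  ∑ i, ∑ j, Sig⁻¹ i j * a j * a i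

/-- `⟨Σ t, t⟩`. -/
def qMat {d : ℕ} (Sig : Matrix (Fin d) (Fin d) ℝ) (t : Ed d) : ℝ :=
  ∑ i, ∑ j, Sig i j * t j * t i

/-- characteristic-type function `t ↦ E[f(X_n) e^{i⟨t,S_n⟩}]`. -/
def charFn {E Ω : Type*} [MeasurableSpace Ω] {d : ℕ} (ℙ : Measure Ω) (f : E → ℝ)
    (X : ℕ → Ω → E) (S : ℕ → Ω → Ed d) (n : ℕ) (t : Ed d) : ℂ :=
  ∫ ω, (f (X n ω) : ℂ) * Complex.exp (Complex.I * ((inner ℝ t (S n ω) : ℝ) : ℂ)) ∂ℙ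

/-- Hypothesis `R(m)`-(i) for the family of characteristic-type functions `φ`. -/
def HypROne {d : ℕ} (φ : ℕ → Ed d → ℂ) (m R : ℝ) (lam L : Ed d → ℂ)
    (Rn : ℕ → Ed d → ℂ) : Prop :=
  0 < R ∧ lam 0 = 1 ∧ IsCbm m (ball 0 R) lam ∧ IsCbm m (ball 0 R) L ∧
  (∀ n : ℕ, 1 ≤ n → ∀ t ∈ ball (0 : Ed d) R, φ n t = lam t ^ n * L t + Rn n t) ∧
  TendstoUniformlyOn (fun N t => ∑ n ∈ Finset.range N, Rn (n + 1) t)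
    (fun t => ∑' n : ℕ, Rn (n + 1) t) atTop (ball (0 : Ed d) R) ∧
  IsCbm m (ball 0 R) (fun t => ∑' n : ℕ, Rn (n + 1) t)

/-- Hypothesis `R(m)`-(ii) for the family of characteristic-type functions `φ`. -/
def HypRTwo {d : ℕ} (φ : ℕ → Ed d → ℂ) (m : ℝ) : Prop :=
  ∀ r r' : ℝ, 0 < r → r < r' →
    TendstoUniformlyOn (fun N t => ∑ n ∈ Finset.range N, φ (n + 1) t)
      (fun t => ∑' n : ℕ, φ (n + 1) t) atTop {t : Ed d | r < ‖t‖ ∧ ‖t‖ < r'} ∧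
    IsCbm m {t : Ed d | r < ‖t‖ ∧ ‖t‖ < r'} (fun t => ∑' n : ℕ, φ (n + 1) t)

/-- `e^{-i⟨t,a⟩}`. -/
def eMinus {d : ℕ} (t a : Ed d) : ℂ :=
  Complex.exp (-Complex.I * ((inner ℝ t a : ℝ) : ℂ))


open Asymptotics Real
open scoped FourierTransform RealInnerProductSpace

lemma decayF' {d k : ℕ} (φ : Ed d → ℂ) (hφ : ContDiff ℝ (k : ℕ∞) φ)
    (hs : HasCompactSupport φ) :
    (𝓕 φ) =o[cocompact (Ed d)] fun w : Ed d => ‖w‖ ^ (-(k : ℝ)) := by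
  have hint : ∀ n : ℕ, (n : ℕ∞) ≤ (k : ℕ∞) → Integrable (iteratedFDeriv ℝ n φ) := by
    intro n hn
    exact (hφ.continuous_iteratedFDeriv (by exact_mod_cast hn)).integrable_of_hasCompactSupport
      (hs.iteratedFDeriv n)
  have key := Real.fourier_iteratedFDeriv (N := (k : ℕ∞)) hφ hint le_rfl
  have hRL : Tendsto (fun w => ‖𝓕 (iteratedFDeriv ℝ k φ) w‖) (cocompact (Ed d)) (𝓝 0) := by
    have := tendsto_integral_exp_inner_smul_cocompact (V := Ed d)
      (f := iteratedFDeriv ℝ k φ)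
    simpa [Real.fourier_eq] using this.norm
  have hbound : ∀ w : Ed d, w ≠ 0 →
      (2 * π) ^ k * (‖w‖ ^ k * ‖𝓕 φ w‖) ≤ ‖𝓕 (iteratedFDeriv ℝ k φ) w‖ := by
    intro w hw
    set u : Ed d := ‖w‖⁻¹ • w with hu
    have hnw : (0:ℝ) < ‖w‖ := norm_pos_iff.2 hw
    have hun : ‖u‖ = 1 := by
      rw [hu, norm_smul, norm_inv, norm_norm, inv_mul_cancel₀ hnw.ne']
    have hin : ⟪w, u⟫ = ‖w‖ := by
      rw [hu, real_inner_smul_right, real_inner_self_eq_norm_mul_norm]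
      field_simp
    have happ : ‖(𝓕 (iteratedFDeriv ℝ k φ) w) (fun _ : Fin k => u)‖
        = (2 * π) ^ k * (‖w‖ ^ k * ‖𝓕 φ w‖) := by
      rw [key]
      simp only [VectorFourier.fourierPowSMulRight_apply]
      have hinner : ((-innerSL ℝ) w) u = -‖w‖ := by
        simp only [ContinuousLinearMap.neg_apply, innerSL_apply_apply, hin]
      rw [Finset.prod_const, hinner, norm_smul, norm_smul]
      have h1 : ‖(-(2 * (π:ℂ) * Complex.I))^k‖ = (2*π)^k := by
        rw [norm_pow, norm_neg]
        simp [norm_mul, abs_of_nonneg Real.pi_nonneg]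
      have h2 : ‖((-‖w‖)^(Finset.univ : Finset (Fin k)).card : ℝ)‖ = ‖w‖ ^ k := by
        simp [abs_pow]
      rw [h1, h2]
    calc (2 * π) ^ k * (‖w‖ ^ k * ‖𝓕 φ w‖)
        = ‖(𝓕 (iteratedFDeriv ℝ k φ) w) (fun _ : Fin k => u)‖ := happ.symm
      _ ≤ ‖𝓕 (iteratedFDeriv ℝ k φ) w‖ * ∏ _i : Fin k, ‖u‖ :=
          (𝓕 (iteratedFDeriv ℝ k φ) w).le_opNorm _
      _ = ‖𝓕 (iteratedFDeriv ℝ k φ) w‖ := by simp [hun]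
  rw [isLittleO_iff]
  intro c hc
  have h2πk : (0:ℝ) < (2*π)^k := by positivity
  have hev0 : ∀ᶠ w : Ed d in cocompact (Ed d), w ≠ 0 := by
    rw [eventually_iff]
    apply mem_cocompact.2
    exact ⟨{0}, isCompact_singleton, by intro x hx; simpa using hx⟩
  have hev1 : ∀ᶠ w : Ed d in cocompact (Ed d),
      ‖𝓕 (iteratedFDeriv ℝ k φ) w‖ ≤ c * (2*π)^k :=
    hRL.eventually (eventually_le_nhds (by positivity))
  filter_upwards [hev0, hev1] with w hw hle
  have hnw : (0:ℝ) < ‖w‖ := norm_pos_iff.2 hw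
  have hg : ‖‖w‖ ^ (-(k:ℝ))‖ = (‖w‖ ^ k)⁻¹ := by
    rw [Real.norm_eq_abs, abs_of_nonneg (Real.rpow_nonneg hnw.le _),
      Real.rpow_neg hnw.le, Real.rpow_natCast]
  rw [hg]
  have h3 : ‖w‖ ^ k * ‖𝓕 φ w‖ ≤ c := by
    have := (hbound w hw).trans hle
    rw [mul_comm c] at this
    exact le_of_mul_le_mul_left this h2πk
  rw [← div_eq_mul_inv, le_div_iff₀ (pow_pos hnw k)]
  rw [mul_comm] at h3
  exact h3

lemma decayFT' {d k : ℕ} (φ : Ed d → ℂ) (hφ : ContDiff ℝ (k : ℕ∞) φ)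
    (hs : HasCompactSupport φ) :
    ftransform φ =o[cocompact (Ed d)] fun a : Ed d => ‖a‖ ^ (-(k : ℝ)) := by
  have h2π : (0:ℝ) < 2 * π := by positivity
  have heq : ∀ a : Ed d, ftransform φ a = 𝓕 φ ((2*π)⁻¹ • a) := by
    intro a
    rw [Real.fourier_eq]
    unfold ftransform
    congr 1
    funext x
    rw [Circle.smul_def, Real.fourierChar_apply, mul_comm]
    congr 1
    have hsm : ⟪x, (2*π)⁻¹ • a⟫ = (2*π)⁻¹ * ⟪x, a⟫ := real_inner_smul_right _ _ _
    rw [hsm]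
    have hinner : ((inner ℝ a x : ℝ) : ℂ) = ((⟪x, a⟫ : ℝ) : ℂ) := by
      rw [real_inner_comm]
    rw [hinner]
    congr 1
    push_cast
    have hne : (2*(π:ℂ)) ≠ 0 := by
      simp only [ne_eq, mul_eq_zero, OfNat.ofNat_ne_zero, false_or]
      exact_mod_cast Real.pi_ne_zero
    field_simp
  have hsc : Tendsto (fun a : Ed d => (2*π)⁻¹ • a) (cocompact (Ed d)) (cocompact (Ed d)) :=
    (Homeomorph.smulOfNeZero ((2*π)⁻¹ : ℝ)
      (by positivity)).toCocompactMap.cocompact_tendsto'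
  have hnorm : ∀ a : Ed d, ‖(2*π)⁻¹ • a‖ ^ (-(k:ℝ))
      = ((2*π)⁻¹) ^ (-(k:ℝ)) * ‖a‖ ^ (-(k:ℝ)) := by
    intro a
    rw [norm_smul, Real.norm_eq_abs, abs_of_pos (by positivity),
      Real.mul_rpow (by positivity) (norm_nonneg _)]
  have hc1 := ((decayF' φ hφ hs).comp_tendsto hsc).congr (fun _ => rfl) hnorm
  have hc2 := hc1.trans_isBigO (isBigO_const_mul_self (((2*π)⁻¹) ^ (-(k:ℝ))) _ _)
  exact hc2.congr (fun a => (heq a).symm) (fun _ => rfl)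

lemma globalCD' {d : ℕ} (k : ℕ) (O : Set (Ed d)) (φ : Ed d → ℂ) (hO : IsOpen O)
    (hsupp : tsupport φ ⊆ O) (hcd : ContDiffOn ℝ (k : ℕ∞) φ O) :
    ContDiff ℝ (k : ℕ∞) φ := by
  rw [contDiff_iff_contDiffAt]
  intro x
  by_cases hx : x ∈ O
  · exact hcd.contDiffAt (hO.mem_nhds hx)
  · have hx' : x ∉ tsupport φ := fun hmem => hx (hsupp hmem)
    have hev : φ =ᶠ[𝓝 x] fun _ => 0 := by
      filter_upwards [(isClosed_tsupport φ).isOpen_compl.mem_nhds hx'] with y hy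
      exact image_eq_zero_of_notMem_tsupport hy
    exact (contDiffAt_const (c := 0)).congr_of_eventuallyEq hev

/-- **Lemma (Fourier decay of `C_b^m` compactly supported functions, and
`J(a) + K(a) = o(‖a‖^{-(d-2)})`).** -/
theorem fourier_decay_and_JK_estimate
    {E Ω : Type*} [MeasurableSpace E] [MeasurableSpace Ω]
    {d : ℕ} (hd : 3 ≤ d)
    (m : ℝ) (hm : (d : ℝ) - 2 ≤ m) (hm' : d - 2 ≤ ⌊m⌋₊)
    (ℙ : Measure Ω) [IsProbabilityMeasure ℙ]
    (X : ℕ → Ω → E) (S : ℕ → Ω → Ed d)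
    (hX : ∀ n, Measurable (X n)) (hS : ∀ n, Measurable (S n))
    (f : E → ℝ) (hf_meas : Measurable f) (hf_nonneg : ∀ x, 0 ≤ f x)
    (hf_int : ∀ n : ℕ, 1 ≤ n → Integrable (fun ω => f (X n ω)) ℙ)
    (ε : ℝ) (hε : 0 < ε)
    (mren : ℝ) (hmren : mren = max ((d : ℝ) - 2) (2 + ε))
    (R : ℝ) (lam L : Ed d → ℂ) (Rn : ℕ → Ed d → ℂ)
    (h1 : HypROne (charFn ℙ f X S) mren R lam L Rn)
    (h2 : HypRTwo (charFn ℙ f X S) mren)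
    (h : Ed d → ℂ) (hh : MemHk (d - 2) h)
    (b : ℝ) (hb : 0 < b) (hhb : ∀ t : Ed d, b < ‖t‖ → ftransform h t = 0)
    (r α : ℝ) (hr : 0 < r) (hrα : r < α) (hαR : α < R)
    (χ : Ed d → ℝ) (hχ : ContDiff ℝ (⊤ : ℕ∞) χ) (hχc : HasCompactSupport χ)
    (hχsupp : Function.support χ ⊆ closedBall (0 : Ed d) α)
    (hχone : ∀ t : Ed d, ‖t‖ ≤ r → χ t = 1) :
    (∀ (O : Set (Ed d)) (φ : Ed d → ℂ), IsOpen O → HasCompactSupport φ →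
        tsupport φ ⊆ O → IsCbm m O φ →
        ftransform φ =o[cocompact (Ed d)] fun a : Ed d => ‖a‖ ^ (-((d : ℝ) - 2))) ∧
    ((fun a : Ed d =>
        (∫ t in closedBall (0 : Ed d) α,
          ((χ t : ℝ) : ℂ) * ftransform h t * (∑' n : ℕ, Rn (n + 1) t) * eMinus t a) +
        ∫ t in {t : Ed d | r < ‖t‖ ∧ ‖t‖ ≤ b},
          (1 - ((χ t : ℝ) : ℂ)) * ftransform h t *
            (∑' n : ℕ, charFn ℙ f X S (n + 1) t) * eMinus t a)
      =o[cocompact (Ed d)] fun a : Ed d => ‖a‖ ^ (-((d : ℝ) - 2))) := by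
  have h2d : (2:ℕ) ≤ d := by omega
  have hcast : ((d - 2 : ℕ) : ℝ) = (d : ℝ) - 2 := by
    rw [Nat.cast_sub h2d]; norm_num
  have hexp : (fun a : Ed d => ‖a‖ ^ (-((d:ℝ) - 2)))
      = fun a : Ed d => ‖a‖ ^ (-(((d - 2 : ℕ)) : ℝ)) := by
    rw [hcast]
  constructor
  · intro O φ hO hc hsupp hcbm
    rw [hexp]
    exact decayFT' φ (globalCD' _ O φ hO hsupp (hcbm.1.of_le (by exact_mod_cast hm'))) hc
  · set Sb : Set (Ed d) := {t : Ed d | r < ‖t‖ ∧ ‖t‖ ≤ b} with hSb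
    set F : Ed d → ℂ := fun t => ∑' n : ℕ, Rn (n + 1) t with hF
    set G : Ed d → ℂ := fun t => ∑' n : ℕ, charFn ℙ f X S (n + 1) t with hG
    set φJ : Ed d → ℂ := fun t => ((χ t : ℝ) : ℂ) * ftransform h t * F t with hφJdef
    set φK : Ed d → ℂ := fun t => (1 - ((χ t : ℝ) : ℂ)) * ftransform h t * G t with hφKdef
    have hχ0 : ∀ t : Ed d, α < ‖t‖ → χ t = 0 := by
      intro t ht
      by_contra hne
      have hmem := hχsupp (Function.mem_support.2 hne)
      rw [mem_closedBall_zero_iff] at hmem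
      linarith
    have hφJ0 : ∀ t : Ed d, t ∉ closedBall (0 : Ed d) α → φJ t = 0 := by
      intro t ht
      rw [mem_closedBall_zero_iff] at ht
      rw [hφJdef]
      simp [hχ0 t (not_le.1 ht)]
    have hφK0 : ∀ t : Ed d, t ∉ Sb → φK t = 0 := by
      intro t ht
      rw [hSb] at ht
      simp only [Set.mem_setOf_eq, not_and_or, not_lt, not_le] at ht
      rw [hφKdef]
      rcases ht with ht | ht
      · simp [hχone t ht]
      · simp [hhb t ht]
    have hχC : ContDiff ℝ ((d-2:ℕ) : ℕ∞) (fun t : Ed d => ((χ t : ℝ) : ℂ)) :=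
      (Complex.ofRealCLM.contDiff.comp hχ).of_le (by exact_mod_cast le_top)
    have hhC : ContDiff ℝ ((d-2:ℕ) : ℕ∞) (ftransform h) := hh.2.2.2
    have hfl2 : (d-2:ℕ) ≤ ⌊mren⌋₊ :=
      Nat.le_floor (by rw [hcast, hmren]; exact le_max_left _ _)
    have hFC : ContDiffOn ℝ ((d-2:ℕ) : ℕ∞) F (ball (0:Ed d) R) :=
      (h1.2.2.2.2.2.2.1).of_le (by exact_mod_cast hfl2)
    have hcdJ : ContDiff ℝ ((d-2:ℕ) : ℕ∞) φJ := by
      rw [contDiff_iff_contDiffAt]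
      intro x
      rcases lt_or_ge ‖x‖ R with hx | hx
      · have hcdo : ContDiffOn ℝ ((d-2:ℕ):ℕ∞) φJ (ball (0:Ed d) R) :=
          (hχC.contDiffOn.mul hhC.contDiffOn).mul hFC
        exact hcdo.contDiffAt (isOpen_ball.mem_nhds (mem_ball_zero_iff.2 hx))
      · have hαx : α < ‖x‖ := lt_of_lt_of_le hαR hx
        have hev : φJ =ᶠ[𝓝 x] fun _ => 0 := by
          filter_upwards [(isOpen_lt continuous_const continuous_norm).mem_nhds
            (show x ∈ {t : Ed d | α < ‖t‖} from hαx)] with t ht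
          exact hφJ0 t (by rw [mem_closedBall_zero_iff]; exact not_le.2 ht)
        exact (contDiffAt_const (c := 0)).congr_of_eventuallyEq hev
    have hcdK : ContDiff ℝ ((d-2:ℕ) : ℕ∞) φK := by
      rw [contDiff_iff_contDiffAt]
      intro x
      rcases lt_or_ge ‖x‖ r with hx | hx
      · have hev : φK =ᶠ[𝓝 x] fun _ => 0 := by
          filter_upwards [(isOpen_lt continuous_norm continuous_const).mem_nhds
            (show x ∈ {t : Ed d | ‖t‖ < r} from hx)] with t ht
          rw [hφKdef]
          simp [hχone t (le_of_lt ht)]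
        exact (contDiffAt_const (c := 0)).congr_of_eventuallyEq hev
      rcases lt_or_ge b ‖x‖ with hx2 | hx2
      · have hev : φK =ᶠ[𝓝 x] fun _ => 0 := by
          filter_upwards [(isOpen_lt continuous_const continuous_norm).mem_nhds
            (show x ∈ {t : Ed d | b < ‖t‖} from hx2)] with t ht
          rw [hφKdef]
          simp [hhb t ht]
        exact (contDiffAt_const (c := 0)).congr_of_eventuallyEq hev
      · have hrb : r ≤ b := le_trans hx hx2
        have hGC : ContDiffOn ℝ ((d-2:ℕ):ℕ∞) G {t : Ed d | r/2 < ‖t‖ ∧ ‖t‖ < b+1} :=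
          ((h2 (r/2) (b+1) (by linarith) (by linarith)).2.1).of_le (by exact_mod_cast hfl2)
        have hopen : IsOpen {t : Ed d | r/2 < ‖t‖ ∧ ‖t‖ < b+1} := by
          have hre : {t : Ed d | r/2 < ‖t‖ ∧ ‖t‖ < b+1}
              = {t : Ed d | r/2 < ‖t‖} ∩ {t : Ed d | ‖t‖ < b+1} := rfl
          rw [hre]
          exact (isOpen_lt continuous_const continuous_norm).inter
            (isOpen_lt continuous_norm continuous_const)
        have honeC : ContDiff ℝ ((d-2:ℕ):ℕ∞) (fun t : Ed d => 1 - ((χ t:ℝ):ℂ)) :=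
          contDiff_const.sub hχC
        have hcdo : ContDiffOn ℝ ((d-2:ℕ):ℕ∞) φK {t : Ed d | r/2 < ‖t‖ ∧ ‖t‖ < b+1} :=
          (honeC.contDiffOn.mul hhC.contDiffOn).mul hGC
        exact hcdo.contDiffAt (hopen.mem_nhds ⟨by linarith, by linarith⟩)
    have hcsJ : HasCompactSupport φJ :=
      HasCompactSupport.intro (isCompact_closedBall (0:Ed d) α) hφJ0
    have hcsK : HasCompactSupport φK := by
      apply HasCompactSupport.intro (isCompact_closedBall (0:Ed d) b)
      intro t ht
      rw [mem_closedBall_zero_iff] at ht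
      exact hφK0 t (fun hmem => ht hmem.2)
    have hFT : ∀ (ψ : Ed d → ℂ) (a : Ed d), ftransform ψ a = ∫ t, ψ t * eMinus t a := by
      intro ψ a
      unfold ftransform eMinus
      congr 1
      funext x
      rw [real_inner_comm]
    have hJ : ∀ a : Ed d, (∫ t in closedBall (0:Ed d) α,
        ((χ t : ℝ) : ℂ) * ftransform h t * (∑' n : ℕ, Rn (n + 1) t) * eMinus t a)
        = ftransform φJ a := by
      intro a
      calc (∫ t in closedBall (0:Ed d) α,
            ((χ t : ℝ) : ℂ) * ftransform h t * (∑' n : ℕ, Rn (n + 1) t) * eMinus t a)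
          = ∫ t in closedBall (0:Ed d) α, φJ t * eMinus t a := rfl
        _ = ∫ t, φJ t * eMinus t a :=
            setIntegral_eq_integral_of_forall_compl_eq_zero
              (fun t ht => by rw [hφJ0 t ht, zero_mul])
        _ = ftransform φJ a := (hFT φJ a).symm
    have hK : ∀ a : Ed d, (∫ t in Sb,
        (1 - ((χ t : ℝ) : ℂ)) * ftransform h t
          * (∑' n : ℕ, charFn ℙ f X S (n + 1) t) * eMinus t a)
        = ftransform φK a := by
      intro a
      calc (∫ t in Sb, (1 - ((χ t : ℝ) : ℂ)) * ftransform h t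
            * (∑' n : ℕ, charFn ℙ f X S (n + 1) t) * eMinus t a)
          = ∫ t in Sb, φK t * eMinus t a := rfl
        _ = ∫ t, φK t * eMinus t a :=
            setIntegral_eq_integral_of_forall_compl_eq_zero
              (fun t ht => by rw [hφK0 t ht, zero_mul])
        _ = ftransform φK a := (hFT φK a).symm
    have hfun : (fun a : Ed d =>
        (∫ t in closedBall (0 : Ed d) α,
          ((χ t : ℝ) : ℂ) * ftransform h t * (∑' n : ℕ, Rn (n + 1) t) * eMinus t a) +
        ∫ t in {t : Ed d | r < ‖t‖ ∧ ‖t‖ ≤ b},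
          (1 - ((χ t : ℝ) : ℂ)) * ftransform h t *
            (∑' n : ℕ, charFn ℙ f X S (n + 1) t) * eMinus t a)
        = fun a => ftransform φJ a + ftransform φK a :=
      funext fun a => by rw [← hJ a, ← hK a]
    rw [hfun, hexp]
    exact (decayFT' φJ hcdJ hcsJ).add (decayFT' φK hcdK hcsK)
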